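/- Suppose that 0 ≤ x₁ ≤ x₂ ≤ ... ≤ x_r = 1 are real numbers satisfying x_i + x_j ≤ x_{i+j} for all 1 ≤ i ≤ j with i + j ≤ r. Then x₁ · x₂ ⋯ x_r ≤ r!/r^r. -/

import Mathlib

/-- Chao–Yu product inequality: if `0 ≤ x 1 ≤ ⋯ ≤ x r = 1` and
`x i + x j ≤ x (i+j)` whenever `1 ≤ i ≤ j` and `i + j ≤ r`, then
`x 1 ⋯ x r ≤ r!/r^r`. -/
theorem chao_yu_product_inequality (r : ℕ) (hr : 2 ≤ r) (x : ℕ → ℝ)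
    (hx0 : 0 ≤ x 1)
    (hmono : ∀ i j : ℕ, 1 ≤ i → i ≤ j → j ≤ r → x i ≤ x j)
    (hxr : x r = 1)
    (hsuper : ∀ i j : ℕ, 1 ≤ i → i ≤ j → i + j ≤ r → x i + x j ≤ x (i + j)) :
    ∏ i ∈ Finset.Icc 1 r, x i ≤ (r.factorial : ℝ) / (r : ℝ) ^ r := by
  have hrpos : (0:ℝ) < r := by positivity
  have hxnn : ∀ i, 1 ≤ i → i ≤ r → 0 ≤ x i := fun i h1 h2 =>
    hx0.trans (hmono 1 i le_rfl h1 h2)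
  -- Pairing lemma : 2 * ∑_{i=1}^{n} x i ≤ (n+1) * x n
  have pair : ∀ n, 1 ≤ n → n ≤ r →
      2 * (∑ i ∈ Finset.Icc 1 n, x i) ≤ ((n:ℝ) + 1) * x n := by
    intro n hn1 hnr
    obtain ⟨m, rfl⟩ : ∃ m, n = m + 1 := ⟨n - 1, by omega⟩
    have hrefl : ∑ i ∈ Finset.Icc 1 m, x (m + 1 - i) = ∑ i ∈ Finset.Icc 1 m, x i := by
      refine Finset.sum_nbij' (fun i => m + 1 - i) (fun i => m + 1 - i) ?_ ?_ ?_ ?_ ?_ <;>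
        intro a ha <;> simp only [Finset.mem_Icc] at * <;> omega
    have hterm : ∀ i ∈ Finset.Icc 1 m, x i + x (m + 1 - i) ≤ x (m + 1) := by
      intro i hi
      simp only [Finset.mem_Icc] at hi
      rcases le_or_gt i (m + 1 - i) with h | h
      · have := hsuper i (m + 1 - i) hi.1 h (by omega)
        rwa [show i + (m + 1 - i) = m + 1 by omega] at this
      · have := hsuper (m + 1 - i) i (by omega) h.le (by omega)
        rw [show (m + 1 - i) + i = m + 1 by omega] at this
        linarith
    have hsplit : ∑ i ∈ Finset.Icc 1 (m + 1), x i
        = (∑ i ∈ Finset.Icc 1 m, x i) + x (m + 1) :=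
      Finset.sum_Icc_succ_top (by omega) x
    have hsum : ∑ i ∈ Finset.Icc 1 m, (x i + x (m + 1 - i))
        ≤ ∑ i ∈ Finset.Icc 1 m, x (m + 1) := Finset.sum_le_sum hterm
    rw [Finset.sum_add_distrib, hrefl, Finset.sum_const, Nat.card_Icc] at hsum
    simp only [Nat.add_sub_cancel, nsmul_eq_mul] at hsum
    rw [hsplit]
    push_cast
    linarith
  -- Key linear claim, multiplied through by n
  have claim : ∀ n, 1 ≤ n → n ≤ r →
      (n:ℝ) * (∑ k ∈ Finset.Icc 1 n, x k / k)
        ≤ 2 * (∑ k ∈ Finset.Icc 1 n, x k) - x n := by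
    intro n hn1
    induction n, hn1 using Nat.le_induction with
    | base => intro _; simp; linarith
    | succ n hn ih =>
      intro hsr
      have hnr : n ≤ r := by omega
      have IH := ih hnr
      have hp : 2 * (∑ i ∈ Finset.Icc 1 n, x i) ≤ ((n:ℝ) + 1) * x n := pair n hn hnr
      have hsplit : ∑ i ∈ Finset.Icc 1 (n + 1), x i
          = (∑ i ∈ Finset.Icc 1 n, x i) + x (n + 1) :=
        Finset.sum_Icc_succ_top (by omega) x
      have hsplit' : ∑ k ∈ Finset.Icc 1 (n + 1), x k / k
          = (∑ k ∈ Finset.Icc 1 n, x k / k) + x (n + 1) / ((n:ℝ) + 1) := by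
        have h := Finset.sum_Icc_succ_top (a := 1) (b := n) (by omega) (fun k => x k / k)
        push_cast at h ⊢
        exact h
      set S := ∑ i ∈ Finset.Icc 1 n, x i with hS
      set T := ∑ k ∈ Finset.Icc 1 n, x k / k with hT
      -- from IH : n * T ≤ 2 S - x n  and  2 S ≤ (n+1) x n, get (n+1) T ≤ 2 S
      have hnpos : (0:ℝ) < n := by exact_mod_cast hn
      have key : ((n:ℝ) + 1) * T ≤ 2 * S := by
        have h1 : (n:ℝ) * (((n:ℝ) + 1) * T) ≤ (n:ℝ) * (2 * S) := by nlinarith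
        exact le_of_mul_le_mul_left h1 hnpos
      rw [hsplit, hsplit']
      have hxnn' : 0 ≤ x (n + 1) := hxnn (n + 1) (by omega) hsr
      push_cast
      have hn1pos : (0:ℝ) < (n:ℝ) + 1 := by positivity
      have : ((n:ℝ) + 1) * (x (n + 1) / ((n:ℝ) + 1)) = x (n + 1) := by
        field_simp
      nlinarith [key]
  -- the linear inequality ∑ x k / k ≤ 1
  have hT : (∑ k ∈ Finset.Icc 1 r, x k / k) ≤ 1 := by
    have h1 := claim r (by omega) le_rfl
    have h2 := pair r (by omega) le_rfl
    rw [hxr] at h1 h2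
    have : (r:ℝ) * (∑ k ∈ Finset.Icc 1 r, x k / k) ≤ (r:ℝ) * 1 := by linarith
    exact le_of_mul_le_mul_left this hrpos
  -- AM-GM step
  set s := Finset.Icc 1 r with hs
  have hcard : s.card = r := by simp [hs]
  set z : ℕ → ℝ := fun i => (r:ℝ) * x i / i with hz
  have hznn : ∀ i ∈ s, 0 ≤ z i := by
    intro i hi
    simp only [hs, Finset.mem_Icc] at hi
    have := hxnn i hi.1 hi.2
    have : (0:ℝ) ≤ (r:ℝ) * x i := by positivity
    positivity
  have hw' : ∑ _i ∈ s, (1:ℝ)/r = 1 := by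
    rw [Finset.sum_const, hcard, nsmul_eq_mul]
    field_simp
  have amgm := Real.geom_mean_le_arith_mean_weighted s (fun _ => (1:ℝ)/r) z
    (fun i _ => by positivity) hw' hznn
  have hsum_eq : ∑ i ∈ s, (1:ℝ)/r * z i = ∑ i ∈ s, x i / i := by
    refine Finset.sum_congr rfl fun i hi => ?_
    simp only [hz]
    field_simp
  rw [hsum_eq] at amgm
  have hprod_rpow : ∏ i ∈ s, z i ^ ((1:ℝ)/r) = (∏ i ∈ s, z i) ^ ((1:ℝ)/r) :=
    Real.finset_prod_rpow s z hznn _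
  rw [hprod_rpow] at amgm
  have hprodz_nn : 0 ≤ ∏ i ∈ s, z i := Finset.prod_nonneg hznn
  have hprodz_le : (∏ i ∈ s, z i) ≤ 1 := by
    have h1 : (∏ i ∈ s, z i) ^ ((1:ℝ)/r) ≤ 1 := amgm.trans hT
    have h2 : ((∏ i ∈ s, z i) ^ ((1:ℝ)/r)) ^ (r:ℕ) ≤ 1 :=
      pow_le_one₀ (Real.rpow_nonneg hprodz_nn _) h1
    rwa [← Real.rpow_natCast ((∏ i ∈ s, z i) ^ ((1:ℝ)/r)) r, ← Real.rpow_mul hprodz_nn,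
      one_div, inv_mul_cancel₀ (ne_of_gt hrpos), Real.rpow_one] at h2
  -- final assembly
  have hx_eq : ∏ i ∈ s, x i = (∏ i ∈ s, ((i:ℝ)/r)) * ∏ i ∈ s, z i := by
    rw [← Finset.prod_mul_distrib]
    refine Finset.prod_congr rfl fun i hi => ?_
    simp only [hs, Finset.mem_Icc] at hi
    have hi0 : (0:ℝ) < i := by exact_mod_cast hi.1
    simp only [hz]
    field_simp
  have hfact : ∏ i ∈ s, ((i:ℝ)/r) = (r.factorial : ℝ) / (r:ℝ) ^ r := by
    rw [Finset.prod_div_distrib, Finset.prod_const, hcard]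
    congr 1
    rw [show s = Finset.Ico 1 (r + 1) by simp [hs, Finset.Ico_add_one_right_eq_Icc], ← Nat.cast_prod]
    exact_mod_cast congrArg (Nat.cast : ℕ → ℝ) (Finset.prod_Ico_id_eq_factorial r)
  have hfact_nn : (0:ℝ) ≤ (r.factorial : ℝ) / (r:ℝ) ^ r := by positivity
  calc ∏ i ∈ s, x i = ((r.factorial : ℝ) / (r:ℝ) ^ r) * ∏ i ∈ s, z i := by
        rw [hx_eq, hfact]
    _ ≤ ((r.factorial : ℝ) / (r:ℝ) ^ r) * 1 := by
        exact mul_le_mul_of_nonneg_left hprodz_le hfact_nn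
    _ = (r.factorial : ℝ) / (r:ℝ) ^ r := mul_one _
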